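/- Fix an integer k ≥ 1, integers 0 ≤ i, j ≤ k, and a word a ∈ {l,r}^k with exactly i letters equal to r. Then: (1) the number of words b ∈ {l,r}^k with exactly j letters equal to r for which there exists m ∈ {1,…,k} with a_m = l and b_m = r equals binom(k,j) − binom(i,j); (2) the number of words b ∈ {l,r}^k with exactly j letters equal to r for which there exists m ∈ {1,…,k} with m > i and b_m = r also equals binom(k,j) − binom(i,j). Consequently, for every a with |a|_r = i, the row sums of the parallel and series transition matrices over the words b with |b|_r = j both equal binom(k,j) − binom(i,j). -/

import Mathlib

/-- The number of letters `r` in a word of `{l, r}^k`, encoding letters `l`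
and `r` as `false` and `true` respectively. -/
def rcount {k : ℕ} (a : Fin k → Bool) : ℕ :=
  (Finset.univ.filter fun m => a m = true).card

/-- The parallel transition matrix `M_k^∥`: the entry at `(a, b)` is `1` if
there is a position `m` with `a_m = l` and `b_m = r`, and `0` otherwise. -/
def Mpar (k : ℕ) : Matrix (Fin k → Bool) (Fin k → Bool) ℕ :=
  Matrix.of fun a b => if ∃ m, a m = false ∧ b m = true then 1 else 0

/-- The series transition matrix `M_k^⊢`: the entry at `(a, b)` is `1` if
there is a (1-indexed) position `m > |a|_r` with `b_m = r`, and `0`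
otherwise. -/
def Mser (k : ℕ) : Matrix (Fin k → Bool) (Fin k → Bool) ℕ :=
  Matrix.of fun a b => if ∃ m : Fin k, rcount a ≤ (m : ℕ) ∧ b m = true then 1 else 0

/-- The `(k+1) × (k+1)` matrix `N_k` with entries
`(N_k)_{i,j} = binom k j - binom i j` for `0 ≤ i, j ≤ k`. -/
def Nmat (k : ℕ) : Matrix (Fin (k + 1)) (Fin (k + 1)) ℕ :=
  Matrix.of fun i j => Nat.choose k (j : ℕ) - Nat.choose (i : ℕ) (j : ℕ)

/-- Words with `j` letters `r` all of whose `r`-positions lie in `S` are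
counted by `binom |S| j`. -/
lemma card_eq_choose {k : ℕ} (j : ℕ) (S : Finset (Fin k)) :
    (Finset.univ.filter fun b : Fin k → Bool =>
      rcount b = j ∧ ∀ m, b m = true → m ∈ S).card = S.card.choose j := by
  rw [← Finset.card_powersetCard j S]
  apply Finset.card_nbij' (i := fun b => Finset.univ.filter fun m => b m = true)
    (j := fun s m => decide (m ∈ s))
  · intro b hb
    simp only [Finset.mem_coe, Finset.mem_filter, Finset.mem_univ, true_and] at hb
    rw [Finset.mem_coe, Finset.mem_powersetCard]
    refine ⟨fun m hm => ?_, hb.1⟩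
    simp only [Finset.mem_filter, Finset.mem_univ, true_and] at hm
    exact hb.2 m hm
  · intro s hs
    rw [Finset.mem_coe, Finset.mem_powersetCard] at hs
    rw [Finset.mem_coe, Finset.mem_filter]
    simp only [Finset.mem_univ, true_and, rcount]
    constructor
    · rw [← hs.2]; congr 1; ext m; simp
    · intro m hm; simp at hm; exact hs.1 hm
  · intro b _; funext m; simp
  · intro s _; ext m; simp

/-- The key counting lemma: words with `j` letters `r` having an `r`-position
outside a set `S` of size `i` are counted by `binom k j - binom i j`. -/
lemma card_not_sub {k i j : ℕ} (S : Finset (Fin k)) (hS : S.card = i)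
    (P : (Fin k → Bool) → Prop) [DecidablePred P]
    (hP : ∀ b, P b ↔ ¬ ∀ m, b m = true → m ∈ S) :
    (Finset.univ.filter fun b : Fin k → Bool => rcount b = j ∧ P b).card
      = Nat.choose k j - Nat.choose i j := by
  classical
  have h1 : (Finset.univ.filter fun b : Fin k → Bool =>
      rcount b = j ∧ ∀ m, b m = true → m ∈ S).card = Nat.choose i j := by
    rw [card_eq_choose, hS]
  have h2 : (Finset.univ.filter fun b : Fin k → Bool => rcount b = j).card
      = Nat.choose k j := by
    have := card_eq_choose (k := k) j (Finset.univ : Finset (Fin k))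
    simpa using this
  have key := Finset.card_filter_add_card_filter_not
    (s := Finset.univ.filter fun b : Fin k → Bool => rcount b = j) (p := P)
  rw [Finset.filter_filter, Finset.filter_filter, h2] at key
  have hnot : (Finset.univ.filter fun b : Fin k → Bool => rcount b = j ∧ ¬ P b)
      = Finset.univ.filter fun b : Fin k → Bool =>
        rcount b = j ∧ ∀ m, b m = true → m ∈ S := by
    apply Finset.filter_congr
    intro b _
    rw [hP b, not_not]
  rw [hnot, h1] at key
  have hle : Nat.choose i j ≤ Nat.choose k j := by
    apply Nat.choose_le_choose
    rw [← hS]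
    simpa using Finset.card_le_card (Finset.subset_univ S)
  rw [← key, Nat.add_sub_cancel]

/-- For a word `a ∈ {l, r}^k` with exactly `i` letters `r` and `0 ≤ j ≤ k`:
(1) the number of words `b` with exactly `j` letters `r` such that some
position carries `l` in `a` and `r` in `b` is `binom k j - binom i j`;
(2) the number of words `b` with exactly `j` letters `r` such that some
(1-indexed) position `m > i` carries `r` in `b` is also
`binom k j - binom i j`. Consequently the corresponding row sums of the
parallel and series transition matrices both equal `binom k j - binom i j`. -/
theorem rowSums_Mpar_Mser (k : ℕ) (hk : 1 ≤ k) (i j : ℕ) (hik : i ≤ k)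
    (hjk : j ≤ k) (a : Fin k → Bool) (ha : rcount a = i) :
    ((Finset.univ.filter fun b : Fin k → Bool =>
        rcount b = j ∧ ∃ m, a m = false ∧ b m = true).card
      = Nat.choose k j - Nat.choose i j) ∧
    ((Finset.univ.filter fun b : Fin k → Bool =>
        rcount b = j ∧ ∃ m : Fin k, i ≤ (m : ℕ) ∧ b m = true).card
      = Nat.choose k j - Nat.choose i j) ∧
    (∑ b ∈ Finset.univ.filter fun b : Fin k → Bool => rcount b = j,
        Mpar k a b = Nat.choose k j - Nat.choose i j) ∧
    (∑ b ∈ Finset.univ.filter fun b : Fin k → Bool => rcount b = j,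
        Mser k a b = Nat.choose k j - Nat.choose i j) := by
  classical
  have hpar : (Finset.univ.filter fun b : Fin k → Bool =>
      rcount b = j ∧ ∃ m, a m = false ∧ b m = true).card
      = Nat.choose k j - Nat.choose i j := by
    apply card_not_sub (S := Finset.univ.filter fun m => a m = true) ha
    intro b
    push_neg
    constructor
    · rintro ⟨m, ham, hbm⟩
      exact ⟨m, hbm, by simp [ham]⟩
    · rintro ⟨m, hbm, hm⟩
      simp only [Finset.mem_filter, Finset.mem_univ, true_and] at hm
      exact ⟨m, by simpa using hm, hbm⟩
  have hser : (Finset.univ.filter fun b : Fin k → Bool =>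
      rcount b = j ∧ ∃ m : Fin k, i ≤ (m : ℕ) ∧ b m = true).card
      = Nat.choose k j - Nat.choose i j := by
    have hScard : (Finset.univ.filter fun m : Fin k => (m : ℕ) < i).card = i := by
      have := Fintype.card_fin_lt_of_le hik
      simpa [Fintype.card_subtype] using this
    apply card_not_sub (S := Finset.univ.filter fun m : Fin k => (m : ℕ) < i) hScard
    intro b
    push_neg
    constructor
    · rintro ⟨m, him, hbm⟩
      exact ⟨m, hbm, by simpa using him⟩
    · rintro ⟨m, hbm, hm⟩
      simp only [Finset.mem_filter, Finset.mem_univ, true_and, not_lt] at hm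
      exact ⟨m, hm, hbm⟩
  refine ⟨hpar, hser, ?_, ?_⟩
  · rw [← hpar, ← Finset.filter_filter]
    simp [Mpar, Finset.sum_boole]
  · rw [← hser, ← Finset.filter_filter]
    simp [Mser, ha, Finset.sum_boole]
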